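/- arXiv:1501.02381 — 4 statements merged into one kernel-verified Lean document; each statement's English description precedes it below -/
import Mathlib

section
/- Let Φ = A/B be a rational function with A, B coprime polynomials of exact degrees κ and λ respectively, and let ζ ∈ ℂ with B(ζ) ≠ 0. If p > κ and q > λ, then the q×q Hankel determinant of the Taylor coefficients (aᵢ)_{p-q+1 ≤ i ≤ p+q-1} of Φ at ζ (with aᵢ = 0 for i < 0) vanishes. -/
noncomputable def aZ (a : ℕ → ℂ) (k : ℤ) : ℂ := if k < 0 then 0 else a k.toNat

noncomputable def hankelDet (a : ℕ → ℂ) (p q : ℕ) : ℂ :=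
  Matrix.det (Matrix.of fun i j : Fin q => aZ a ((p : ℤ) - q + 1 + (i : ℕ) + (j : ℕ)))

noncomputable def Spoly (a : ℕ → ℂ) (ζ : ℂ) (k : ℤ) : Polynomial ℂ :=
  if k < 0 then 0 else
    ∑ v ∈ Finset.range (k.toNat + 1), Polynomial.C (a v) * (Polynomial.X - Polynomial.C ζ) ^ v

noncomputable def padeDenomPoly (a : ℕ → ℂ) (ζ : ℂ) (p q : ℕ) : Polynomial ℂ :=
  Matrix.det (Matrix.of fun i j : Fin (q + 1) =>
    if (i : ℕ) = 0 then (Polynomial.X - Polynomial.C ζ) ^ (q - (j : ℕ))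
    else Polynomial.C (aZ a ((p : ℤ) - q + (i : ℕ) + (j : ℕ))))

noncomputable def padeNumPoly (a : ℕ → ℂ) (ζ : ℂ) (p q : ℕ) : Polynomial ℂ :=
  Matrix.det (Matrix.of fun i j : Fin (q + 1) =>
    if (i : ℕ) = 0 then
      (Polynomial.X - Polynomial.C ζ) ^ (q - (j : ℕ)) * Spoly a ζ ((p : ℤ) - q + (j : ℕ))
    else Polynomial.C (aZ a ((p : ℤ) - q + (i : ℕ) + (j : ℕ))))

noncomputable def tc (f : ℂ → ℂ) (ζ : ℂ) (v : ℕ) : ℂ := iteratedDeriv v f ζ / (v.factorial : ℂ)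

noncomputable def padeVal (f : ℂ → ℂ) (ζ : ℂ) (p q : ℕ) (z : ℂ) : ℂ :=
  (padeNumPoly (tc f ζ) ζ p q).eval z / (padeDenomPoly (tc f ζ) ζ p q).eval z

noncomputable def ratSeries (A B : Polynomial ℂ) (ζ : ℂ) : PowerSeries ℂ :=
  ((Polynomial.taylor ζ A : Polynomial ℂ) : PowerSeries ℂ) *
    ((Polynomial.taylor ζ B : Polynomial ℂ) : PowerSeries ℂ)⁻¹

def IsPade (a : ℕ → ℂ) (ζ : ℂ) (p q : ℕ) (A B : Polynomial ℂ) : Prop :=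
  A.degree ≤ (p : ℕ) ∧ B.degree ≤ (q : ℕ) ∧ B.eval ζ = 1 ∧
    ∀ v ≤ p + q, PowerSeries.coeff v (ratSeries A B ζ) = a v

/-- For a rational function `Φ = A/B` with `A, B` coprime of exact degrees `κ`, `λ`,
`B(ζ) ≠ 0`, and `p > κ`, `q > λ`, the `q×q` Hankel determinant of the Taylor
coefficients of `Φ` at `ζ` vanishes. -/
theorem hankel_det_vanishes_of_rational (A B : Polynomial ℂ) (κ l : ℕ) (hAB : IsCoprime A B)
    (hA : A.natDegree = κ) (hB : B.natDegree = l) (ζ : ℂ) (hζ : B.eval ζ ≠ 0)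
    (p q : ℕ) (hp : κ < p) (hq : l < q) :
    hankelDet (fun v => PowerSeries.coeff v (ratSeries A B ζ)) p q = 0 := by
  classical
  set a : ℕ → ℂ := fun v => PowerSeries.coeff v (ratSeries A B ζ) with ha
  set b : ℕ → ℂ := fun m => (Polynomial.taylor ζ B).coeff m with hbdef
  have hb0 : b 0 ≠ 0 := by simpa [hbdef, Polynomial.taylor_coeff_zero] using hζ
  have hconst : PowerSeries.constantCoeff
      ((Polynomial.taylor ζ B : Polynomial ℂ) : PowerSeries ℂ) ≠ 0 := by
    rw [← PowerSeries.coeff_zero_eq_constantCoeff_apply, Polynomial.coeff_coe,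
      Polynomial.taylor_coeff_zero]
    exact hζ
  have hmul : ((Polynomial.taylor ζ B : Polynomial ℂ) : PowerSeries ℂ) * ratSeries A B ζ
      = ((Polynomial.taylor ζ A : Polynomial ℂ) : PowerSeries ℂ) := by
    rw [ratSeries, ← mul_assoc,
      mul_comm ((Polynomial.taylor ζ B : Polynomial ℂ) : PowerSeries ℂ), mul_assoc,
      PowerSeries.mul_inv_cancel _ hconst, mul_one]
  have key : ∀ k : ℕ, κ < k → ∑ m ∈ Finset.range q, b m * aZ a ((k : ℤ) - m) = 0 := by
    intro k hk
    have h1 : ∑ m ∈ Finset.range q, b m * aZ a ((k : ℤ) - m)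
        = ∑ m ∈ Finset.range (max q (k + 1)), b m * aZ a ((k : ℤ) - m) := by
      refine Finset.sum_subset (Finset.range_subset_range.2 (le_max_left _ _)) ?_
      intro m _ hm
      have hm' : q ≤ m := by simpa using hm
      have hbm : b m = 0 := by
        apply Polynomial.coeff_eq_zero_of_natDegree_lt
        rw [Polynomial.natDegree_taylor, hB]; omega
      simp [hbm]
    have h2 : ∑ m ∈ Finset.range (k + 1), b m * aZ a ((k : ℤ) - m)
        = ∑ m ∈ Finset.range (max q (k + 1)), b m * aZ a ((k : ℤ) - m) := by
      refine Finset.sum_subset (Finset.range_subset_range.2 (le_max_right _ _)) ?_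
      intro m _ hm
      have hm' : k + 1 ≤ m := by simpa using hm
      have hz : aZ a ((k : ℤ) - m) = 0 := by rw [aZ, if_pos (by omega)]
      simp [hz]
    rw [h1, ← h2]
    have h3 : ∑ m ∈ Finset.range (k + 1), b m * aZ a ((k : ℤ) - m)
        = ∑ m ∈ Finset.range (k + 1), b m * a (k - m) := by
      refine Finset.sum_congr rfl fun m hm => ?_
      have hm' : m ≤ k := by simpa [Nat.lt_succ_iff] using hm
      have ht : ((k : ℤ) - m).toNat = k - m := by omega
      rw [aZ, if_neg (by omega), ht]
    have h4 : ∑ m ∈ Finset.range (k + 1), b m * a (k - m)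
        = PowerSeries.coeff k
            (((Polynomial.taylor ζ B : Polynomial ℂ) : PowerSeries ℂ) * ratSeries A B ζ) := by
      rw [PowerSeries.coeff_mul, Finset.Nat.sum_antidiagonal_eq_sum_range_succ_mk]
      exact Finset.sum_congr rfl fun m _ => by rw [Polynomial.coeff_coe]
    rw [h3, h4, hmul, Polynomial.coeff_coe]
    apply Polynomial.coeff_eq_zero_of_natDegree_lt
    rw [Polynomial.natDegree_taylor, hA]; exact hk
  rw [hankelDet, ← Matrix.exists_mulVec_eq_zero_iff]
  refine ⟨fun j : Fin q => b (q - 1 - (j : ℕ)), ?_, ?_⟩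
  · intro h0
    apply hb0
    have := congrFun h0 ⟨q - 1, by omega⟩
    simpa using this
  · funext i
    have hsum : ∑ j ∈ Finset.range q,
        aZ a ((p : ℤ) - q + 1 + (i : ℕ) + j) * b (q - 1 - j) = 0 := by
      have hrefl := Finset.sum_range_reflect
        (fun m => b m * aZ a ((p : ℤ) + (i : ℕ) - m)) q
      have hlhs : ∑ j ∈ Finset.range q,
          (fun m => b m * aZ a ((p : ℤ) + (i : ℕ) - m)) (q - 1 - j)
          = ∑ j ∈ Finset.range q, aZ a ((p : ℤ) - q + 1 + (i : ℕ) + j) * b (q - 1 - j) := by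
        refine Finset.sum_congr rfl fun j hj => ?_
        have hj' : j < q := Finset.mem_range.1 hj
        have hcast : (p : ℤ) + (i : ℕ) - ((q - 1 - j : ℕ) : ℤ)
            = (p : ℤ) - q + 1 + (i : ℕ) + j := by omega
        simp only [hcast]; ring
      have hrhs : ∑ m ∈ Finset.range q, b m * aZ a ((p : ℤ) + (i : ℕ) - m) = 0 := by
        have := key (p + (i : ℕ)) (by omega)
        simpa [Nat.cast_add] using this
      rw [← hlhs, hrefl, hrhs]
    simp only [Matrix.mulVec, dotProduct, Matrix.of_apply, Pi.zero_apply]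
    rw [Finset.sum_congr rfl (fun j _ => rfl), ← Fin.sum_univ_eq_sum_range
      (fun j => aZ a ((p : ℤ) - q + 1 + (i : ℕ) + j) * b (q - 1 - j)) q] at hsum
    exact hsum
end

section
/- Let Ω ⊂ ℂ be a domain. Then there exists a sequence (Kₘ)_{m≥1} of compact subsets of ℂ \ Ω, each with connected complement in ℂ, such that every compact set K ⊂ ℂ \ Ω with connected complement is contained in some Kₘ. -/
open Metric Set

noncomputable def ratC (q : ℚ × ℚ) : ℂ := ⟨(q.1 : ℝ), (q.2 : ℝ)⟩

lemma ratC_dense (z : ℂ) {ε : ℝ} (hε : 0 < ε) : ∃ q : ℚ × ℚ, dist (ratC q) z < ε := by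
  obtain ⟨q1, hq1⟩ := exists_rat_near z.re (half_pos hε)
  obtain ⟨q2, hq2⟩ := exists_rat_near z.im (half_pos hε)
  refine ⟨(q1, q2), ?_⟩
  have h : dist (ratC (q1, q2)) z = ‖ratC (q1, q2) - z‖ := Complex.dist_eq _ _
  rw [h]
  calc ‖ratC (q1, q2) - z‖ ≤ |(ratC (q1, q2) - z).re| + |(ratC (q1, q2) - z).im| :=
        Complex.norm_le_abs_re_add_abs_im _
    _ < ε := by
        simp only [Complex.sub_re, Complex.sub_im, ratC]
        have h1 : |(q1:ℝ) - z.re| < ε/2 := by rwa [abs_sub_comm] at hq1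
        have h2 : |(q2:ℝ) - z.im| < ε/2 := by rwa [abs_sub_comm] at hq2
        linarith

lemma chainBalls {r : ℝ} (hr : 0 < r) :
    ∀ l : List ℂ, l ≠ [] → l.Chain' (fun a b => dist a b < r) →
      IsConnected (⋃ z ∈ l, Metric.ball z r)
  | [], h, _ => absurd rfl h
  | [a], _, _ => by
      simpa using (convex_ball a r).isConnected (nonempty_ball.2 hr)
  | a :: b :: l, _, hch => by
    have h1 : IsConnected (⋃ z ∈ (b :: l), Metric.ball z r) :=
      chainBalls hr (b :: l) (by simp) hch.tail
    have hab : dist a b < r := (List.isChain_cons_cons.mp hch).1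
    have heq : (⋃ z ∈ (a :: b :: l), Metric.ball z r)
        = Metric.ball a r ∪ ⋃ z ∈ (b :: l), Metric.ball z r := by
      ext x; simp [List.mem_cons, or_assoc]
    rw [heq]
    refine IsConnected.union ⟨b, ?_, ?_⟩ ((convex_ball a r).isConnected (nonempty_ball.2 hr)) h1
    · rw [mem_ball, dist_comm]; exact hab
    · exact mem_biUnion (List.mem_cons_self) (mem_ball_self hr)

lemma connComplBall (R : ℝ) : IsConnected ((Metric.closedBall (0:ℂ) R)ᶜ) := by
  have hrank : 1 < Module.rank ℝ ℂ := by
    rw [Complex.rank_real_complex]; norm_num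
  have hmem : ∀ z : ℂ, z ∈ (Metric.closedBall (0:ℂ) R)ᶜ ↔ R < ‖z‖ := by
    intro z; simp [Metric.mem_closedBall, dist_zero_right, not_le]
  set x₀ : ℂ := ((max R 0 + 1 : ℝ) : ℂ)
  have hx₀ : x₀ ∈ (Metric.closedBall (0:ℂ) R)ᶜ := by
    rw [hmem, Complex.norm_real, Real.norm_eq_abs, abs_of_nonneg (by positivity)]
    have := le_max_left R 0; linarith
  refine ⟨⟨x₀, hx₀⟩, isPreconnected_of_forall x₀ ?_⟩
  intro y hy
  rw [hmem] at hy
  refine ⟨Metric.sphere (0:ℂ) ‖y‖ ∪ (Complex.ofReal '' Set.Ioi R), ?_, ?_, ?_, ?_⟩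
  · rintro z (hz | ⟨s, hs, rfl⟩)
    · rw [hmem]; rw [mem_sphere_iff_norm, sub_zero] at hz; rw [hz]; exact hy
    · rw [hmem, Complex.norm_real, Real.norm_eq_abs]
      exact lt_of_lt_of_le hs (le_abs_self s)
  · right
    exact ⟨max R 0 + 1, by simp [Set.mem_Ioi]; have := le_max_left R 0; linarith, rfl⟩
  · left; simp [mem_sphere_iff_norm]
  · refine IsPreconnected.union ((‖y‖ : ℝ) : ℂ) ?_ ?_
      (isPreconnected_sphere hrank 0 ‖y‖) ?_
    · simp [mem_sphere_iff_norm, Complex.norm_real, Real.norm_eq_abs, abs_of_nonneg (norm_nonneg y)]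
    · exact ⟨‖y‖, hy, rfl⟩
    · exact (isPreconnected_Ioi).image _ (Complex.continuous_ofReal.continuousOn)

/-- For a domain `Ω ⊆ ℂ` there is a sequence `Kₘ` of compact subsets of `ℂ \ Ω` with
connected complements such that every compact `K ⊆ ℂ \ Ω` with connected complement is
contained in some `Kₘ`. -/
theorem exists_exhausting_compacts_outside (Ω : Set ℂ) (hΩ : IsOpen Ω)
    (hconn : IsConnected Ω) :
    ∃ Kseq : ℕ → Set ℂ,
      (∀ m : ℕ, IsCompact (Kseq m) ∧ Kseq m ⊆ Ωᶜ ∧ IsConnected (Kseq m)ᶜ) ∧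
      ∀ K : Set ℂ, IsCompact K → K ⊆ Ωᶜ → IsConnected Kᶜ → ∃ m : ℕ, K ⊆ Kseq m := by
  classical
  obtain ⟨f, hf⟩ := exists_surjective_nat (List (ℚ × ℚ) × ℕ × ℕ)
  set G : List (ℚ × ℚ) × ℕ × ℕ → Set ℂ := fun d =>
    (Metric.closedBall (0:ℂ) d.2.1 ∩ Ωᶜ) \ (⋃ p ∈ d.1, Metric.ball (ratC p) ((1:ℝ)/(d.2.2+1)))
    with hG
  set F : List (ℚ × ℚ) × ℕ × ℕ → Set ℂ := fun d => if IsConnected (G d)ᶜ then G d else ∅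
    with hFdef
  have hGcompact : ∀ d, IsCompact (G d) := by
    intro d
    refine (isCompact_closedBall (0:ℂ) d.2.1).of_isClosed_subset ?_ ?_
    · exact ((Metric.isClosed_closedBall).inter (isClosed_compl_iff.mpr hΩ)).sdiff
        (isOpen_biUnion fun _ _ => isOpen_ball)
    · exact fun z hz => hz.1.1
  have hGsub : ∀ d, G d ⊆ Ωᶜ := fun d z hz => hz.1.2
  refine ⟨fun m => F (f m), ?_, ?_⟩
  · intro m
    by_cases h : IsConnected (G (f m))ᶜ
    · simp only [hFdef, if_pos h]
      exact ⟨hGcompact _, hGsub _, h⟩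
    · simp only [hFdef, if_neg h, compl_empty]
      exact ⟨isCompact_empty, empty_subset _, isConnected_univ⟩
  · intro K hK hKΩ hKc
    -- get bounding radius
    obtain ⟨R, hR⟩ := hK.isBounded.subset_closedBall 0
    obtain ⟨m, hm⟩ := exists_nat_ge R
    have hKball : K ⊆ Metric.closedBall (0:ℂ) m :=
      hR.trans (Metric.closedBall_subset_closedBall hm)
    have hKopen : IsOpen Kᶜ := hK.isClosed.isOpen_compl
    obtain ⟨z₀, hz₀⟩ := hconn.nonempty
    have hz₀K : z₀ ∈ Kᶜ := fun h => hKΩ h hz₀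
    set z₁ : ℂ := (((m:ℝ) + 1 : ℝ) : ℂ) with hz₁def
    have hz₁norm : ‖z₁‖ = (m:ℝ) + 1 := by
      rw [hz₁def, Complex.norm_real, Real.norm_eq_abs, abs_of_nonneg (by positivity)]
    have hz₁K : z₁ ∈ Kᶜ := by
      intro h
      have := hKball h
      rw [Metric.mem_closedBall, dist_zero_right, hz₁norm] at this
      linarith
    have hpc : IsPathConnected Kᶜ := (hKopen.isConnected_iff_isPathConnected).mp hKc
    obtain ⟨γ, hγ⟩ := (hpc.joinedIn z₀ hz₀K z₁ hz₁K)
    set S : Set ℂ := Set.range γ with hSdef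
    have hScomp : IsCompact S := isCompact_range γ.continuous
    have hSsub : S ⊆ Kᶜ := by rintro _ ⟨t, rfl⟩; exact hγ t
    obtain ⟨δ, hδ0, hδ⟩ := hScomp.exists_thickening_subset_open hKopen hSsub
    -- choose n with 1/(n+1) < δ/2
    obtain ⟨n, hn⟩ := exists_nat_gt (2/δ)
    set ρ : ℝ := (1:ℝ)/((n:ℝ)+1) with hρdef
    have hρ0 : 0 < ρ := by positivity
    have hρδ : ρ < δ/2 := by
      rw [hρdef, div_lt_div_iff₀ (by positivity) (by norm_num)]
      rw [div_lt_iff₀ hδ0] at hn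
      nlinarith
    -- uniform continuity
    have hUC := Metric.uniformContinuous_iff.mp
      (CompactSpace.uniformContinuous_of_continuous γ.continuous) (ρ/3) (by positivity)
    obtain ⟨δ', hδ'0, hδ'⟩ := hUC
    obtain ⟨k, hk⟩ := exists_nat_gt (1/δ')
    have hk0 : (0:ℝ) < k := lt_trans (by positivity) hk
    have hkk : (1:ℝ)/k < δ' := by
      rw [div_lt_iff₀ hk0]
      rw [div_lt_iff₀ hδ'0] at hk
      nlinarith
    -- points along the path
    set t : ℕ → unitInterval := fun i =>
      ⟨min ((i:ℝ)/k) 1, le_min (by positivity) zero_le_one, min_le_right _ _⟩ with htdef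
    have hqex : ∀ i : ℕ, ∃ q : ℚ × ℚ, dist (ratC q) (γ (t i)) < ρ/3 :=
      fun i => ratC_dense _ (by positivity)
    choose q hq using hqex
    set d : List (ℚ × ℚ) × ℕ × ℕ := ((List.range (k+1)).map q, m, n) with hddef
    set N : Set ℂ := ⋃ p ∈ d.1, Metric.ball (ratC p) ((1:ℝ)/(d.2.2+1)) with hNdef
    have hNρ : N = ⋃ p ∈ (List.range (k+1)).map q, Metric.ball (ratC p) ρ := rfl
    -- balls avoid K
    have hballK : ∀ i : ℕ, ∀ z ∈ Metric.ball (ratC (q i)) ρ, z ∉ K := by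
      intro i z hz hzK
      have h1 : dist z (γ (t i)) < δ := by
        have := hq i
        rw [Metric.mem_ball] at hz
        calc dist z (γ (t i)) ≤ dist z (ratC (q i)) + dist (ratC (q i)) (γ (t i)) :=
              dist_triangle _ _ _
          _ < ρ + ρ/3 := by linarith
          _ < δ := by linarith
      have : z ∈ Metric.thickening δ S :=
        Metric.mem_thickening_iff.mpr ⟨γ (t i), ⟨t i, rfl⟩, h1⟩
      exact hδ this hzK
    have hKN : ∀ z ∈ K, z ∉ N := by
      intro z hz hzN
      rw [hNρ] at hzN
      simp only [Set.mem_iUnion, List.mem_map, List.mem_range] at hzN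
      obtain ⟨p, ⟨⟨i, _, rfl⟩, hp⟩⟩ := hzN
      exact hballK i z hp hz
    have hKG : K ⊆ G d := by
      intro z hz
      exact ⟨⟨hKball hz, hKΩ hz⟩, hKN z hz⟩
    -- the complement of G d is connected
    have ht0 : t 0 = 0 := by
      apply Subtype.ext
      simp [htdef]
    have htk : t k = 1 := by
      apply Subtype.ext
      simp [htdef, div_self (ne_of_gt hk0)]
    have hγ0 : γ (t 0) = z₀ := by rw [ht0]; exact γ.source
    have hγk : γ (t k) = z₁ := by rw [htk]; exact γ.target
    have hz₀N : z₀ ∈ N := by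
      rw [hNρ]
      refine Set.mem_biUnion (List.mem_map.mpr ⟨0, List.mem_range.mpr (Nat.succ_pos k), rfl⟩) ?_
      rw [Metric.mem_ball, dist_comm, ← hγ0]
      exact lt_trans (hq 0) (by linarith)
    have hz₁N : z₁ ∈ N := by
      rw [hNρ]
      refine Set.mem_biUnion (List.mem_map.mpr ⟨k, List.mem_range.mpr (Nat.lt_succ_self k), rfl⟩) ?_
      rw [Metric.mem_ball, dist_comm, ← hγk]
      exact lt_trans (hq k) (by linarith)
    have hz₁ball : z₁ ∈ (Metric.closedBall (0:ℂ) m)ᶜ := by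
      rw [Set.mem_compl_iff, Metric.mem_closedBall, dist_zero_right, hz₁norm, not_le]
      linarith
    have hNconn : IsConnected N := by
      rw [hNρ]
      have hmapmap : (⋃ p ∈ (List.range (k+1)).map q, Metric.ball (ratC p) ρ)
          = ⋃ z ∈ ((List.range (k+1)).map q).map ratC, Metric.ball z ρ := by
        ext x
        simp only [Set.mem_iUnion, List.mem_map]
        constructor
        · rintro ⟨p, hp, hx⟩; exact ⟨ratC p, ⟨p, hp, rfl⟩, hx⟩
        · rintro ⟨z, ⟨p, hp, rfl⟩, hx⟩; exact ⟨p, hp, hx⟩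
      rw [hmapmap]
      refine chainBalls hρ0 _ (by simp) ?_
      show List.IsChain _ _
      rw [List.map_map, List.isChain_map, List.isChain_range_succ]
      intro i hi
      -- dist (ratC (q i)) (ratC (q (i+1))) < ρ
      have hti : dist (t i) ((t (i+1))) < δ' := by
        rw [Subtype.dist_eq]
        simp only [htdef]
        have hi1 : (i:ℝ)/k ≤ 1 := by
          rw [div_le_one hk0]; exact_mod_cast le_of_lt hi
        have hi2 : ((i:ℝ)+1)/k ≤ 1 := by
          rw [div_le_one hk0]; exact_mod_cast hi
        rw [min_eq_left hi1]
        have : ((i+1 : ℕ):ℝ) = (i:ℝ)+1 := by push_cast; ring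
        rw [this, min_eq_left hi2]
        rw [Real.dist_eq, abs_of_nonpos (by rw [sub_nonpos]; gcongr <;> linarith)]
        have : -((i:ℝ)/k - ((i:ℝ)+1)/k) = 1/k := by field_simp; ring
        rw [this]
        exact hkk
      have hγi := hδ' hti
      calc dist (ratC (q i)) (ratC (q (i+1)))
          ≤ dist (ratC (q i)) (γ (t i)) + dist (γ (t i)) (γ (t (i+1)))
            + dist (γ (t (i+1))) (ratC (q (i+1))) := dist_triangle4 _ _ _ _
        _ < ρ/3 + ρ/3 + ρ/3 := by
            have h3 := hq (i+1)
            rw [dist_comm (γ (t (i+1)))]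
            have h1 := hq i
            linarith
        _ = ρ := by ring
    have hGcompl : (G d)ᶜ = (Ω ∪ N) ∪ (Metric.closedBall (0:ℂ) m)ᶜ := by
      rw [hG]
      ext z
      simp only [hddef, Set.mem_compl_iff, Set.mem_diff, Set.mem_inter_iff, Set.mem_union,
        not_and, not_not, Set.mem_compl_iff]
      tauto
    have hcond : IsConnected (G d)ᶜ := by
      rw [hGcompl]
      refine IsConnected.union ⟨z₁, Or.inr hz₁N, hz₁ball⟩ ?_ (connComplBall m)
      exact IsConnected.union ⟨z₀, hz₀, hz₀N⟩ hconn hNconn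
    obtain ⟨i, hi⟩ := hf d
    refine ⟨i, ?_⟩
    show K ⊆ F (f i)
    rw [hi, hFdef]
    simp only [if_pos hcond]
    exact hKG
end

section
/- Let Ω ⊂ ℂ be a domain with cl(Ω)° = Ω and {∞} ∪ (ℂ \ cl(Ω)) connected in the Riemann sphere. Then for every m ≥ 1, the compact set L'ₘ = {z : |z| ≤ m} ∩ cl(Ω) has connected complement in the Riemann sphere, and its interior equals Ω ∩ {z : |z| < m}. -/
open OnePoint

lemma isPathConnected_norm_gt (m : ℝ) (hm : 0 ≤ m) :
    IsPathConnected {z : ℂ | m < ‖z‖} := by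
  have hrank : 1 < Module.rank ℝ ℂ := Complex.rank_real_complex ▸ Nat.one_lt_ofNat
  have h0 : IsPathConnected ({(0 : ℂ)}ᶜ) :=
    isPathConnected_compl_singleton_of_one_lt_rank hrank 0
  set f : ℂ → ℂ := fun z => (1 + m * ‖z‖⁻¹) • z with hf
  have hcont : ContinuousOn f ({(0 : ℂ)}ᶜ) := by
    show ContinuousOn ((fun z : ℂ => 1 + m * ‖z‖⁻¹) • (id : ℂ → ℂ)) _
    apply ContinuousOn.smul _ continuousOn_id
    exact continuousOn_const.add (continuousOn_const.mul
      ((continuous_norm.continuousOn).inv₀ (fun z hz => norm_ne_zero_iff.2 hz)))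
  have himg : f '' ({(0 : ℂ)}ᶜ) = {z : ℂ | m < ‖z‖} := by
    ext w
    constructor
    · rintro ⟨z, hz, rfl⟩
      have hz0 : (0 : ℝ) < ‖z‖ := norm_pos_iff.2 hz
      have : ‖f z‖ = ‖z‖ + m := by
        rw [hf]
        simp only [norm_smul, Real.norm_eq_abs]
        rw [abs_of_pos (by positivity), add_mul, one_mul, mul_assoc,
          inv_mul_cancel₀ (ne_of_gt hz0), mul_one, add_comm]
      simp only [Set.mem_setOf_eq, this]
      linarith
    · intro hw
      have hw' : m < ‖w‖ := hw
      have hw0 : (0 : ℝ) < ‖w‖ := lt_of_le_of_lt hm hw'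
      refine ⟨(1 - m * ‖w‖⁻¹) • w, ?_, ?_⟩
      · have h1 : (0 : ℝ) < 1 - m * ‖w‖⁻¹ := by
          rw [sub_pos]
          rw [mul_inv_lt_iff₀ hw0]
          simpa using hw
        simp only [Set.mem_compl_iff, Set.mem_singleton_iff]
        exact smul_ne_zero (ne_of_gt h1) (norm_pos_iff.1 hw0)
      · have h1 : (0 : ℝ) < 1 - m * ‖w‖⁻¹ := by
          rw [sub_pos, mul_inv_lt_iff₀ hw0]; simpa using hw
        have hn : ‖(1 - m * ‖w‖⁻¹) • w‖ = ‖w‖ - m := by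
          rw [norm_smul, Real.norm_eq_abs, abs_of_pos h1, sub_mul, one_mul,
            mul_assoc, inv_mul_cancel₀ (ne_of_gt hw0), mul_one]
        rw [hf]
        simp only [hn, smul_smul]
        have hwm : ‖w‖ - m ≠ 0 := ne_of_gt (by linarith)
        have key : ∀ a : ℝ, a ≠ 0 → a - m ≠ 0 →
            (1 + m * (a - m)⁻¹) * (1 - m * a⁻¹) = 1 := by
          intro a ha1 ha2
          field_simp
          ring
        have : (1 + m * (‖w‖ - m)⁻¹) * (1 - m * ‖w‖⁻¹) = 1 :=
          key _ (ne_of_gt hw0) hwm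
        rw [this, one_smul]
  rw [← himg]
  exact h0.image' hcont

/-- For a domain `Ω` with `(cl Ω)° = Ω` and `{∞} ∪ (ℂ \ cl Ω)` connected in the Riemann
sphere, the compact set `L'ₘ = {|z| ≤ m} ∩ cl Ω` has connected complement in the Riemann
sphere and its interior equals `Ω ∩ {|z| < m}`. -/
theorem closed_ball_inter_closure_props (Ω : Set ℂ) (hΩ : IsOpen Ω)
    (hconn : IsConnected Ω) (hcl : interior (closure Ω) = Ω)
    (hinf : IsConnected (insert (∞ : OnePoint ℂ) ((fun z : ℂ => (z : OnePoint ℂ)) '' (closure Ω)ᶜ)))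
    (m : ℕ) (hm : 1 ≤ m) :
    IsConnected (((fun z : ℂ => (z : OnePoint ℂ)) '' (Metric.closedBall (0 : ℂ) m ∩ closure Ω))ᶜ) ∧
    interior (Metric.closedBall (0 : ℂ) m ∩ closure Ω) = Ω ∩ Metric.ball (0 : ℂ) m := by
  have hm0 : (0 : ℝ) < m := by exact_mod_cast Nat.lt_of_lt_of_le Nat.zero_lt_one hm
  constructor
  · -- complement decomposition
    have hBc : (Metric.closedBall (0 : ℂ) m)ᶜ = {z : ℂ | (m : ℝ) < ‖z‖} := by
      ext z
      simp [Metric.mem_closedBall, not_le, dist_eq_norm]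
    have hset : ((fun z : ℂ => (z : OnePoint ℂ)) '' (Metric.closedBall (0 : ℂ) m ∩ closure Ω))ᶜ =
        (insert (∞ : OnePoint ℂ) ((fun z : ℂ => (z : OnePoint ℂ)) '' {z : ℂ | (m : ℝ) < ‖z‖})) ∪
        (insert (∞ : OnePoint ℂ) ((fun z : ℂ => (z : OnePoint ℂ)) '' (closure Ω)ᶜ)) := by
      rw [show ((fun z : ℂ => (z : OnePoint ℂ)) = ((↑) : ℂ → OnePoint ℂ)) from rfl]
      rw [OnePoint.compl_image_coe, Set.compl_inter, hBc, Set.image_union]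
      ext x
      simp only [Set.mem_union, Set.mem_insert_iff, Set.union_singleton]
      tauto
    rw [hset]
    -- each part connected, both contain ∞
    have h2 : IsConnected (insert (∞ : OnePoint ℂ)
        ((fun z : ℂ => (z : OnePoint ℂ)) '' {z : ℂ | (m : ℝ) < ‖z‖})) := by
      have hc : IsConnected ((fun z : ℂ => (z : OnePoint ℂ)) '' {z : ℂ | (m : ℝ) < ‖z‖}) :=
        ((isPathConnected_norm_gt m hm0.le).isConnected).image _
          OnePoint.continuous_coe.continuousOn
      refine hc.subset_closure (Set.subset_insert _ _) (Set.insert_subset ?_ subset_closure)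
      -- ∞ in closure
      rw [mem_closure_iff]
      intro U hU hxU
      rcases (OnePoint.isOpen_iff_of_mem hxU).1 hU with ⟨-, hK⟩
      obtain ⟨R, hR⟩ := hK.isBounded.subset_closedBall 0
      set z : ℂ := ((max R (m:ℝ) + 1 : ℝ) : ℂ) with hzdef
      have hzn : ‖z‖ = max R (m:ℝ) + 1 := by
        have h0' : (0:ℝ) ≤ max R (m:ℝ) + 1 := by
          have : (m:ℝ) ≤ max R m := le_max_right _ _
          linarith
        rw [hzdef, Complex.norm_real, Real.norm_eq_abs, abs_of_nonneg h0']
      have hz1 : (m : ℝ) < ‖z‖ := by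
        rw [hzn]; have := le_max_right R (m:ℝ); linarith
      have hz2 : z ∉ (((↑) : ℂ → OnePoint ℂ) ⁻¹' U)ᶜ := by
        intro h
        have := hR h
        rw [Metric.mem_closedBall, dist_eq_norm, sub_zero, hzn] at this
        have := le_max_left R (m:ℝ); linarith
      refine ⟨(z : OnePoint ℂ), not_not.1 hz2, ⟨z, hz1, rfl⟩⟩
    exact h2.union ⟨∞, Set.mem_insert _ _, Set.mem_insert _ _⟩ hinf
  · rw [interior_inter, hcl, interior_closedBall _ (ne_of_gt hm0), Set.inter_comm]
end

section
/- Let Ω ⊂ ℂ be open, L, L' ⊂ Ω compact, (p,q) ∈ ℕ², and s ≥ 1. Then the set G = { f ∈ H(Ω) : f ∈ D_{p,q}(ζ) for all ζ ∈ L and sup_{ζ∈L, z∈L'} |[p/q]_{f,ζ}(z) − f(z)| < 1/s } is open in H(Ω) with the topology of uniform convergence on compact subsets of Ω. -/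
/-- Membership in the set `G(Ω, L', L, p, q, s)`: `f` is holomorphic on `Ω`, lies in
`D_{p,q}(ζ)` for all `ζ ∈ L`, its Padé denominators have no zeros on `L'`, and
`sup_{ζ∈L, z∈L'} |[p/q]_{f,ζ}(z) − f(z)| < 1/s`. -/
def memG (Ω L L' : Set ℂ) (p q s : ℕ) (f : ℂ → ℂ) : Prop :=
  DifferentiableOn ℂ f Ω ∧
  (∀ ζ ∈ L, hankelDet (tc f ζ) p q ≠ 0) ∧
  (∀ ζ ∈ L, ∀ z ∈ L', (padeDenomPoly (tc f ζ) ζ p q).eval z ≠ 0) ∧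
  ∃ b : ℝ, b < 1 / (s : ℝ) ∧
    ∀ ζ ∈ L, ∀ z ∈ L', ‖padeVal f ζ p q z - f z‖ ≤ b

-- congruence lemmas

lemma aZ_congr {a a' : ℕ → ℂ} {N : ℕ} (h : ∀ n ≤ N, a n = a' n) {k : ℤ} (hk : k ≤ (N : ℤ)) :
    aZ a k = aZ a' k := by
  unfold aZ
  split_ifs with h0
  · rfl
  · exact h k.toNat (by omega)

lemma Spoly_congr {a a' : ℕ → ℂ} {N : ℕ} (h : ∀ n ≤ N, a n = a' n) {ζ : ℂ} {k : ℤ}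
    (hk : k ≤ (N : ℤ)) : Spoly a ζ k = Spoly a' ζ k := by
  unfold Spoly
  split_ifs with h0
  · rfl
  · refine Finset.sum_congr rfl fun v hv => ?_
    rw [h v (by simp only [Finset.mem_range] at hv; omega)]

lemma hankelDet_congr {a a' : ℕ → ℂ} {p q : ℕ} (h : ∀ n ≤ p + q, a n = a' n) :
    hankelDet a p q = hankelDet a' p q := by
  unfold hankelDet
  refine congrArg Matrix.det (Matrix.ext fun i j => ?_)
  simp only [Matrix.of_apply]
  exact aZ_congr h (by have hi : (i : ℕ) < q := i.isLt; have hj : (j : ℕ) < q := j.isLt; omega)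

lemma padeDenomPoly_congr {a a' : ℕ → ℂ} {ζ : ℂ} {p q : ℕ} (h : ∀ n ≤ p + q, a n = a' n) :
    padeDenomPoly a ζ p q = padeDenomPoly a' ζ p q := by
  unfold padeDenomPoly
  refine congrArg Matrix.det (Matrix.ext fun i j => ?_)
  simp only [Matrix.of_apply]
  split_ifs with h0
  · rfl
  · rw [aZ_congr h (by have hi : (i : ℕ) < q + 1 := i.isLt; have hj : (j : ℕ) < q + 1 := j.isLt; omega)]

lemma padeNumPoly_congr {a a' : ℕ → ℂ} {ζ : ℂ} {p q : ℕ} (h : ∀ n ≤ p + q, a n = a' n) :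
    padeNumPoly a ζ p q = padeNumPoly a' ζ p q := by
  unfold padeNumPoly
  refine congrArg Matrix.det (Matrix.ext fun i j => ?_)
  simp only [Matrix.of_apply]
  split_ifs with h0
  · rw [Spoly_congr h (by have hj : (j : ℕ) < q + 1 := j.isLt; omega)]
  · rw [aZ_congr h (by have hi : (i : ℕ) < q + 1 := i.isLt; have hj : (j : ℕ) < q + 1 := j.isLt; omega)]

-- evaluation lemmas

lemma Spoly_eval (a : ℕ → ℂ) (ζ : ℂ) (k : ℤ) (z : ℂ) :
    (Spoly a ζ k).eval z =
      if k < 0 then 0 else ∑ v ∈ Finset.range (k.toNat + 1), a v * (z - ζ) ^ v := by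
  unfold Spoly
  split_ifs with h0
  · simp
  · simp [Polynomial.eval_finset_sum]

lemma padeDenomPoly_eval (a : ℕ → ℂ) (ζ : ℂ) (p q : ℕ) (z : ℂ) :
    (padeDenomPoly a ζ p q).eval z =
      Matrix.det (Matrix.of fun i j : Fin (q + 1) =>
        if (i : ℕ) = 0 then (z - ζ) ^ (q - (j : ℕ))
        else aZ a ((p : ℤ) - q + (i : ℕ) + (j : ℕ))) := by
  unfold padeDenomPoly
  rw [← Polynomial.coe_evalRingHom, RingHom.map_det]
  refine congrArg Matrix.det (Matrix.ext fun i j => ?_)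
  simp only [Matrix.map_apply, Matrix.of_apply, Polynomial.coe_evalRingHom]
  by_cases h0 : i = 0 <;> simp [h0]

lemma padeNumPoly_eval (a : ℕ → ℂ) (ζ : ℂ) (p q : ℕ) (z : ℂ) :
    (padeNumPoly a ζ p q).eval z =
      Matrix.det (Matrix.of fun i j : Fin (q + 1) =>
        if (i : ℕ) = 0 then (z - ζ) ^ (q - (j : ℕ)) * (Spoly a ζ ((p : ℤ) - q + (j : ℕ))).eval z
        else aZ a ((p : ℤ) - q + (i : ℕ) + (j : ℕ))) := by
  unfold padeNumPoly
  rw [← Polynomial.coe_evalRingHom, RingHom.map_det]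
  refine congrArg Matrix.det (Matrix.ext fun i j => ?_)
  simp only [Matrix.map_apply, Matrix.of_apply, Polynomial.coe_evalRingHom]
  by_cases h0 : i = 0 <;> simp [h0]

-- extension of finitely many coefficients

noncomputable def extC (N : ℕ) (w : Fin (N + 1) → ℂ) : ℕ → ℂ :=
  fun n => if h : n < N + 1 then w ⟨n, h⟩ else 0

lemma extC_eq {N : ℕ} (w : Fin (N + 1) → ℂ) {n : ℕ} (hn : n ≤ N) :
    extC N w n = w ⟨n, Nat.lt_succ_of_le hn⟩ := dif_pos _

lemma continuous_extC (N n : ℕ) : Continuous fun w : Fin (N + 1) → ℂ => extC N w n := by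
  unfold extC
  split_ifs with h
  · exact continuous_apply _
  · exact continuous_const

lemma continuous_aZ_extC (N : ℕ) (k : ℤ) :
    Continuous fun w : Fin (N + 1) → ℂ => aZ (extC N w) k := by
  unfold aZ
  split_ifs with h
  · exact continuous_const
  · exact continuous_extC N _

lemma continuous_Hfun (N p q : ℕ) :
    Continuous fun w : Fin (N + 1) → ℂ => hankelDet (extC N w) p q := by
  unfold hankelDet
  exact Continuous.matrix_det (continuous_matrix fun i j => continuous_aZ_extC N _)

lemma continuous_SpolyEval (N : ℕ) (k : ℤ) :
    Continuous fun x : (Fin (N + 1) → ℂ) × ℂ × ℂ =>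
      (Spoly (extC N x.1) x.2.1 k).eval x.2.2 := by
  simp only [Spoly_eval]
  split_ifs with h
  · exact continuous_const
  · exact continuous_finset_sum _ fun v _ =>
      ((continuous_extC N v).comp continuous_fst).mul
        ((continuous_snd.snd.sub continuous_snd.fst).pow v)

lemma continuous_Dfun (N p q : ℕ) :
    Continuous fun x : (Fin (N + 1) → ℂ) × ℂ × ℂ =>
      (padeDenomPoly (extC N x.1) x.2.1 p q).eval x.2.2 := by
  simp only [padeDenomPoly_eval]
  refine Continuous.matrix_det (continuous_matrix fun i j => ?_)
  simp only [Matrix.of_apply]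
  split_ifs with h0
  · exact (continuous_snd.snd.sub continuous_snd.fst).pow _
  · exact (continuous_aZ_extC N _).comp continuous_fst

lemma continuous_Nfun (N p q : ℕ) :
    Continuous fun x : (Fin (N + 1) → ℂ) × ℂ × ℂ =>
      (padeNumPoly (extC N x.1) x.2.1 p q).eval x.2.2 := by
  simp only [padeNumPoly_eval]
  refine Continuous.matrix_det (continuous_matrix fun i j => ?_)
  simp only [Matrix.of_apply]
  split_ifs with h0
  · exact ((continuous_snd.snd.sub continuous_snd.fst).pow _).mul (continuous_SpolyEval N _)
  · exact (continuous_aZ_extC N _).comp continuous_fst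

-- iterated derivative lemmas

lemma iteratedDerivWithin_of_isOpen' {f : ℂ → ℂ} {Ω : Set ℂ} (hΩ : IsOpen Ω) {x : ℂ}
    (hx : x ∈ Ω) (n : ℕ) : iteratedDerivWithin n f Ω x = iteratedDeriv n f x := by
  rw [iteratedDerivWithin_eq_iteratedFDerivWithin, iteratedDeriv_eq_iteratedFDeriv,
    iteratedFDerivWithin_of_isOpen n hΩ hx]

lemma continuousOn_iteratedDeriv {f : ℂ → ℂ} {Ω : Set ℂ} (hΩ : IsOpen Ω)
    (hf : DifferentiableOn ℂ f Ω) (n : ℕ) : ContinuousOn (iteratedDeriv n f) Ω := by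
  have h1 : ContDiffOn ℂ ⊤ f Ω := (hf.analyticOnNhd hΩ).contDiffOn hΩ.uniqueDiffOn
  have h2 := h1.continuousOn_iteratedDerivWithin (m := n) le_top hΩ.uniqueDiffOn
  exact h2.congr fun x hx => (iteratedDerivWithin_of_isOpen' hΩ hx n).symm

lemma iteratedDeriv_sub' {f g : ℂ → ℂ} {Ω : Set ℂ} (hΩ : IsOpen Ω)
    (hf : DifferentiableOn ℂ f Ω) (hg : DifferentiableOn ℂ g Ω) {x : ℂ} (hx : x ∈ Ω) (n : ℕ) :
    iteratedDeriv n (f - g) x = iteratedDeriv n f x - iteratedDeriv n g x := by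
  rw [← iteratedDerivWithin_of_isOpen' hΩ hx n, ← iteratedDerivWithin_of_isOpen' hΩ hx n,
    ← iteratedDerivWithin_of_isOpen' hΩ hx n,
    iteratedDerivWithin_sub hx hΩ.uniqueDiffOn
      (((hf.analyticOnNhd hΩ).contDiffOn hΩ.uniqueDiffOn).contDiffWithinAt hx)
      (((hg.analyticOnNhd hΩ).contDiffOn hΩ.uniqueDiffOn).contDiffWithinAt hx)]

-- Cauchy estimate

lemma cauchy_bound {f : ℂ → ℂ} {c : ℂ} {r : ℝ} (hr : 0 < r)
    (hf : DifferentiableOn ℂ f (Metric.closedBall c r)) {C : ℝ}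
    (hC : ∀ z ∈ Metric.closedBall c r, ‖f z‖ ≤ C) (n : ℕ) :
    ‖iteratedDeriv n f c‖ ≤ n.factorial * C / r ^ n := by
  have hC0 : 0 ≤ C := le_trans (norm_nonneg _) (hC c (Metric.mem_closedBall_self hr.le))
  lift r to NNReal using hr.le with R
  have hR : 0 < R := by exact_mod_cast hr
  have hps := hf.hasFPowerSeriesOnBall hR
  have h1 := hps.factorial_smul (1 : ℂ) n
  have h2 : iteratedDeriv n f c = (n.factorial : ℂ) * (cauchyPowerSeries f c R n fun _ => (1 : ℂ)) := by
    rw [iteratedDeriv_eq_iteratedFDeriv, ← h1, nsmul_eq_mul]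
  have hcont : ContinuousOn f (Metric.sphere c (R : ℝ)) :=
    hf.continuousOn.mono Metric.sphere_subset_closedBall
  have hcm : Continuous fun θ : ℝ => ‖f (circleMap c R θ)‖ :=
    (hcont.comp_continuous (continuous_circleMap c R)
      (fun θ => circleMap_mem_sphere c R.2 θ)).norm
  have hint : (∫ θ : ℝ in (0 : ℝ)..2 * Real.pi, ‖f (circleMap c R θ)‖) ≤ 2 * Real.pi * C := by
    have := intervalIntegral.integral_mono_on (μ := MeasureTheory.volume)
      Real.two_pi_pos.le (hcm.intervalIntegrable _ _) (intervalIntegrable_const (c := C))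
      (fun θ _ => hC _ (Metric.sphere_subset_closedBall (circleMap_mem_sphere c R.2 θ)))
    simpa using this
  have hns : ‖cauchyPowerSeries f c R n‖ ≤ C * ((R : ℝ)⁻¹) ^ n := by
    refine (norm_cauchyPowerSeries_le f c R n).trans ?_
    rw [abs_of_nonneg (show (0:ℝ) ≤ (R:ℝ) from R.coe_nonneg)]
    refine mul_le_mul_of_nonneg_right ?_ (pow_nonneg (inv_nonneg.2 R.coe_nonneg) n)
    rw [inv_mul_le_iff₀ Real.two_pi_pos]
    linarith [hint]
  have hle : ‖(cauchyPowerSeries f c R n) fun _ => (1 : ℂ)‖ ≤ ‖cauchyPowerSeries f c R n‖ := by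
    simpa using (cauchyPowerSeries f c R n).le_opNorm fun _ => (1 : ℂ)
  rw [h2]
  rw [norm_mul, Complex.norm_natCast]
  calc (n.factorial : ℝ) * ‖(cauchyPowerSeries f c R n) fun _ => (1 : ℂ)‖
      ≤ (n.factorial : ℝ) * (C * ((R : ℝ)⁻¹) ^ n) :=
        mul_le_mul_of_nonneg_left (hle.trans hns) (Nat.cast_nonneg _)
    _ = n.factorial * C / (R : ℝ) ^ n := by
        rw [inv_pow]
        ring


/-- The set `G(Ω, L', L, p, q, s)` is open in `H(Ω)` for the topology of uniform
convergence on compact subsets of `Ω`, expressed via the basic neighborhoods of that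
topology: around each member there is a compact set `L̃ ⊆ Ω` and an `a > 0` such that
every holomorphic `g` with `sup_{L̃} |f − g| < a` is again a member. -/
theorem G_is_open (Ω L L' : Set ℂ) (hΩ : IsOpen Ω)
    (hL : IsCompact L) (hLΩ : L ⊆ Ω) (hL' : IsCompact L') (hL'Ω : L' ⊆ Ω)
    (p q s : ℕ) (hs : 1 ≤ s) :
    ∀ f : ℂ → ℂ, memG Ω L L' p q s f →
      ∃ Lt : Set ℂ, IsCompact Lt ∧ Lt ⊆ Ω ∧
        ∃ a > (0 : ℝ), ∀ g : ℂ → ℂ, DifferentiableOn ℂ g Ω →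
          (∀ z ∈ Lt, ‖f z - g z‖ < a) → memG Ω L L' p q s g := by
  intro f hf
  obtain ⟨hfd, hH, hDen, b, hb, hsup⟩ := hf
  obtain ⟨r, hr, hrΩ⟩ :=
    (hL.union hL').exists_cthickening_subset_open hΩ (Set.union_subset hLΩ hL'Ω)
  refine ⟨Metric.cthickening r (L ∪ L'), (hL.union hL').cthickening, hrΩ, ?_⟩
  -- the coefficient map of f
  set cf : ℂ → (Fin (p + q + 1) → ℂ) := fun ζ v => tc f ζ (v : ℕ) with hcfdef
  have hcf : ∀ ζ, ∀ n ≤ p + q, extC (p + q) (cf ζ) n = tc f ζ n := fun ζ n hn => extC_eq _ hn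
  have hcf_cont : ContinuousOn cf Ω := by
    refine continuousOn_pi.2 fun v => ?_
    exact (continuousOn_iteratedDeriv hΩ hfd (v : ℕ)).div_const _
  -- compact images
  have hK1 : IsCompact ((fun ζ => (cf ζ, ζ)) '' L) :=
    hL.image_of_continuousOn ((hcf_cont.mono hLΩ).prodMk continuousOn_id)
  have hK2 : IsCompact ((fun x : ℂ × ℂ => (cf x.1, x.1, x.2)) '' (L ×ˢ L')) :=
    (hL.prod hL').image_of_continuousOn
      (((hcf_cont.mono hLΩ).comp continuousOn_fst fun x hx => hx.1).prodMk
        (continuous_fst.prodMk continuous_snd).continuousOn)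
  -- open nonvanishing sets
  have hU1 : IsOpen {x : (Fin (p + q + 1) → ℂ) × ℂ | hankelDet (extC (p + q) x.1) p q ≠ 0} :=
    isOpen_compl_singleton.preimage ((continuous_Hfun (p + q) p q).comp continuous_fst)
  have hU2 : IsOpen {x : (Fin (p + q + 1) → ℂ) × ℂ × ℂ |
      (padeDenomPoly (extC (p + q) x.1) x.2.1 p q).eval x.2.2 ≠ 0} :=
    isOpen_compl_singleton.preimage (continuous_Dfun (p + q) p q)
  have hK1U : (fun ζ => (cf ζ, ζ)) '' L ⊆
      {x : (Fin (p + q + 1) → ℂ) × ℂ | hankelDet (extC (p + q) x.1) p q ≠ 0} := by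
    rintro _ ⟨ζ, hζ, rfl⟩
    show hankelDet (extC (p + q) (cf ζ)) p q ≠ 0
    rw [hankelDet_congr (hcf ζ)]
    exact hH ζ hζ
  have hK2U : (fun x : ℂ × ℂ => (cf x.1, x.1, x.2)) '' (L ×ˢ L') ⊆
      {x : (Fin (p + q + 1) → ℂ) × ℂ × ℂ |
        (padeDenomPoly (extC (p + q) x.1) x.2.1 p q).eval x.2.2 ≠ 0} := by
    rintro _ ⟨⟨ζ, z⟩, hx, rfl⟩
    show (padeDenomPoly (extC (p + q) (cf ζ)) ζ p q).eval z ≠ 0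
    rw [padeDenomPoly_congr (hcf ζ)]
    exact hDen ζ hx.1 z hx.2
  obtain ⟨ε1, hε1, hsub1⟩ := hK1.exists_cthickening_subset_open hU1 hK1U
  obtain ⟨ε2, hε2, hsub2⟩ := hK2.exists_cthickening_subset_open hU2 hK2U
  -- uniform continuity of the Padé quotient on a compact neighborhood
  set S := Metric.cthickening ε2 ((fun x : ℂ × ℂ => (cf x.1, x.1, x.2)) '' (L ×ˢ L')) with hSdef
  have hScomp : IsCompact S := hK2.cthickening
  have hQcont : ContinuousOn (fun x : (Fin (p + q + 1) → ℂ) × ℂ × ℂ =>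
      (padeNumPoly (extC (p + q) x.1) x.2.1 p q).eval x.2.2 /
        (padeDenomPoly (extC (p + q) x.1) x.2.1 p q).eval x.2.2) S :=
    ContinuousOn.div (continuous_Nfun (p + q) p q).continuousOn
      (continuous_Dfun (p + q) p q).continuousOn fun x hx => hsub2 hx
  have hQuc := hScomp.uniformContinuousOn_of_continuous hQcont
  have hbpos : 0 < 1 / (s : ℝ) - b := sub_pos.2 hb
  set η := (1 / (s : ℝ) - b) / 3 with hηdef
  have hη : 0 < η := by positivity
  obtain ⟨δu, hδu, hQδ⟩ := Metric.uniformContinuousOn_iff.1 hQuc η hη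
  -- constants
  set C := max 1 (r⁻¹ ^ (p + q)) with hCdef
  have hC1 : (1 : ℝ) ≤ C := le_max_left _ _
  have hC0 : (0 : ℝ) < C := lt_of_lt_of_le one_pos hC1
  set ε0 := min ε1 (min ε2 (δu / 2)) with hε0def
  have hε0 : 0 < ε0 := lt_min hε1 (lt_min hε2 (half_pos hδu))
  refine ⟨min (ε0 / C) η, lt_min (div_pos hε0 hC0) hη, ?_⟩
  intro g hg hga
  set a := min (ε0 / C) η with hadef
  have ha : 0 < a := lt_min (div_pos hε0 hC0) hη
  have haη : a ≤ η := min_le_right _ _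
  -- closeness of coefficient vectors
  have key : ∀ ζ ∈ L, dist (fun v : Fin (p + q + 1) => tc g ζ (v : ℕ)) (cf ζ) ≤ ε0 := by
    intro ζ hζ
    rw [dist_pi_le_iff hε0.le]
    intro v
    have hvN : (v : ℕ) ≤ p + q := Nat.lt_succ_iff.1 v.isLt
    have hball : Metric.closedBall ζ r ⊆ Metric.cthickening r (L ∪ L') :=
      Metric.closedBall_subset_cthickening (Set.mem_union_left _ hζ) r
    have hdiff : DifferentiableOn ℂ (f - g) (Metric.closedBall ζ r) :=
      (hfd.sub hg).mono (hball.trans hrΩ)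
    have hbound : ∀ z ∈ Metric.closedBall ζ r, ‖(f - g) z‖ ≤ a := by
      intro z hz
      simpa using (hga z (hball hz)).le
    have hcb := cauchy_bound hr hdiff hbound (v : ℕ)
    have hsubd := iteratedDeriv_sub' hΩ hfd hg (hLΩ hζ) (v : ℕ)
    have hfact : (0 : ℝ) < ((v : ℕ).factorial : ℝ) := by
      exact_mod_cast Nat.factorial_pos _
    have heq : dist (tc g ζ (v : ℕ)) (tc f ζ (v : ℕ)) =
        ‖iteratedDeriv (v : ℕ) (f - g) ζ‖ / ((v : ℕ).factorial : ℝ) := by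
      have hdd : tc g ζ (v : ℕ) - tc f ζ (v : ℕ) =
          -((iteratedDeriv (v : ℕ) f ζ - iteratedDeriv (v : ℕ) g ζ) /
            (((v : ℕ).factorial : ℕ) : ℂ)) := by
        unfold tc; ring
      rw [dist_eq_norm, hdd, norm_neg, norm_div, ← hsubd, Complex.norm_natCast]
    have h3 : dist (tc g ζ (v : ℕ)) (tc f ζ (v : ℕ)) ≤ a / r ^ (v : ℕ) := by
      rw [heq]
      have h4 : (((v : ℕ).factorial : ℝ) * a / r ^ (v : ℕ)) / ((v : ℕ).factorial : ℝ) =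
          a / r ^ (v : ℕ) := by field_simp
      calc ‖iteratedDeriv (v : ℕ) (f - g) ζ‖ / ((v : ℕ).factorial : ℝ)
          ≤ (((v : ℕ).factorial : ℝ) * a / r ^ (v : ℕ)) / ((v : ℕ).factorial : ℝ) := by gcongr
        _ = a / r ^ (v : ℕ) := h4
    have h5 : r⁻¹ ^ (v : ℕ) ≤ C := by
      rcases le_total r 1 with hr1 | hr1
      · have hi : (1 : ℝ) ≤ r⁻¹ := (one_le_inv₀ hr).2 hr1
        exact le_trans (pow_le_pow_right₀ hi hvN) (le_max_right _ _)
      · have hi : r⁻¹ ≤ 1 := inv_le_one_of_one_le₀ hr1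
        exact le_trans (pow_le_one₀ (inv_nonneg.2 hr.le) hi) hC1
    calc dist (tc g ζ (v : ℕ)) (tc f ζ (v : ℕ))
        ≤ a / r ^ (v : ℕ) := h3
      _ = a * r⁻¹ ^ (v : ℕ) := by rw [div_eq_mul_inv, inv_pow]
      _ ≤ a * C := mul_le_mul_of_nonneg_left h5 ha.le
      _ ≤ (ε0 / C) * C := mul_le_mul_of_nonneg_right (min_le_left _ _) hC0.le
      _ = ε0 := div_mul_cancel₀ _ hC0.ne'
  have hε0ε2 : ε0 ≤ ε2 := le_trans (min_le_right _ _) (min_le_left _ _)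
  refine ⟨hg, ?_, ?_, ?_⟩
  · -- Hankel determinants of g do not vanish
    intro ζ hζ
    have hmem : ((fun v : Fin (p + q + 1) => tc g ζ (v : ℕ)), ζ) ∈
        Metric.cthickening ε1 ((fun ζ => (cf ζ, ζ)) '' L) := by
      refine Metric.mem_cthickening_of_dist_le _ (cf ζ, ζ) _ _
        (Set.mem_image_of_mem _ hζ) ?_
      rw [Prod.dist_eq]
      simp only [dist_self]
      exact max_le ((key ζ hζ).trans (min_le_left _ _)) hε1.le
    have hne := hsub1 hmem
    have hcg : ∀ n ≤ p + q,
        extC (p + q) (fun v : Fin (p + q + 1) => tc g ζ (v : ℕ)) n = tc g ζ n :=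
      fun n hn => extC_eq _ hn
    rw [← hankelDet_congr hcg]
    exact hne
  · -- denominators of g do not vanish on L'
    intro ζ hζ z hz
    have hmem : ((fun v : Fin (p + q + 1) => tc g ζ (v : ℕ)), ζ, z) ∈ S := by
      refine Metric.mem_cthickening_of_dist_le _ (cf ζ, ζ, z) _ _
        (Set.mem_image_of_mem _ (Set.mk_mem_prod hζ hz)) ?_
      rw [Prod.dist_eq, Prod.dist_eq]
      simp only [dist_self, max_self]
      exact max_le ((key ζ hζ).trans hε0ε2) hε2.le
    have hne := hsub2 (hSdef ▸ hmem)
    have hcg : ∀ n ≤ p + q,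
        extC (p + q) (fun v : Fin (p + q + 1) => tc g ζ (v : ℕ)) n = tc g ζ n :=
      fun n hn => extC_eq _ hn
    rw [← padeDenomPoly_congr hcg]
    exact hne
  · -- the sup bound for g
    refine ⟨b + 2 * η, by rw [hηdef]; linarith, ?_⟩
    intro ζ hζ z hz
    have hcg : ∀ n ≤ p + q,
        extC (p + q) (fun v : Fin (p + q + 1) => tc g ζ (v : ℕ)) n = tc g ζ n :=
      fun n hn => extC_eq _ hn
    have hyK : (cf ζ, ζ, z) ∈ (fun x : ℂ × ℂ => (cf x.1, x.1, x.2)) '' (L ×ˢ L') :=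
      Set.mem_image_of_mem _ (Set.mk_mem_prod hζ hz)
    have hyS : (cf ζ, ζ, z) ∈ S := Metric.self_subset_cthickening _ hyK
    have hdle : dist ((fun v : Fin (p + q + 1) => tc g ζ (v : ℕ)), ζ, z) (cf ζ, ζ, z) ≤ ε0 := by
      rw [Prod.dist_eq, Prod.dist_eq]
      simp only [dist_self, max_self]
      exact max_le (key ζ hζ) hε0.le
    have hxS : ((fun v : Fin (p + q + 1) => tc g ζ (v : ℕ)), ζ, z) ∈ S :=
      Metric.mem_cthickening_of_dist_le _ (cf ζ, ζ, z) _ _ hyK (hdle.trans hε0ε2)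
    have hdxy : dist ((fun v : Fin (p + q + 1) => tc g ζ (v : ℕ)), ζ, z) (cf ζ, ζ, z) < δu :=
      lt_of_le_of_lt (hdle.trans (le_trans (min_le_right _ _) (min_le_right _ _)))
        (half_lt_self hδu)
    have hQ := hQδ _ hxS _ hyS hdxy
    dsimp only at hQ
    rw [Complex.dist_eq] at hQ
    have hQx : (padeNumPoly (extC (p + q) (fun v : Fin (p + q + 1) => tc g ζ (v : ℕ))) ζ p q).eval z /
        (padeDenomPoly (extC (p + q) (fun v : Fin (p + q + 1) => tc g ζ (v : ℕ))) ζ p q).eval z =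
        padeVal g ζ p q z := by
      rw [padeNumPoly_congr hcg, padeDenomPoly_congr hcg]; rfl
    have hQy : (padeNumPoly (extC (p + q) (cf ζ)) ζ p q).eval z /
        (padeDenomPoly (extC (p + q) (cf ζ)) ζ p q).eval z = padeVal f ζ p q z := by
      rw [padeNumPoly_congr (hcf ζ), padeDenomPoly_congr (hcf ζ)]; rfl
    rw [hQx, hQy] at hQ
    have h2 : ‖padeVal f ζ p q z - f z‖ ≤ b := hsup ζ hζ z hz
    have h3 : ‖f z - g z‖ ≤ η :=
      le_trans (hga z (Metric.self_subset_cthickening _ (Set.mem_union_right _ hz))).le haη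
    calc ‖padeVal g ζ p q z - g z‖
        ≤ ‖padeVal g ζ p q z - padeVal f ζ p q z‖ +
            ‖padeVal f ζ p q z - g z‖ := by
          have := norm_add_le (padeVal g ζ p q z - padeVal f ζ p q z) (padeVal f ζ p q z - g z)
          rwa [sub_add_sub_cancel] at this
      _ ≤ ‖padeVal g ζ p q z - padeVal f ζ p q z‖ +
            (‖padeVal f ζ p q z - f z‖ + ‖f z - g z‖) :=
          add_le_add le_rfl (by
            have := norm_add_le (padeVal f ζ p q z - f z) (f z - g z)
            rwa [sub_add_sub_cancel] at this)
      _ ≤ η + (b + η) := add_le_add hQ.le (add_le_add h2 h3)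
      _ = b + 2 * η := by ring
end
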